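/- Let c > 0 and let d ∈ ℕ₀ be even. Then f_{c,d}(t) > 0 for all t ∈ ℝ. -/

import Mathlib

open Polynomial

noncomputable section

/-- `f_{c,d} = ∑_{k=0}^d (c^k / (k+1)!) (−T)ᵏ`. -/
def fcd (c : ℝ) (d : ℕ) : Polynomial ℝ :=
  ∑ k ∈ Finset.range (d + 1),
    Polynomial.C (c ^ k / (Nat.factorial (k + 1) : ℝ)) * (-Polynomial.X) ^ k

/-- partial sums of the exponential series -/
def expPoly (n : ℕ) (x : ℝ) : ℝ :=
  ∑ k ∈ Finset.range (n + 1), x ^ k / (Nat.factorial k : ℝ)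

lemma expPoly_zero (n : ℕ) : expPoly n 0 = 1 := by
  unfold expPoly
  rw [Finset.sum_eq_single 0]
  · simp
  · intro k _ hk0; simp [zero_pow hk0]
  · intro h; exact absurd (Finset.mem_range.2 (Nat.succ_pos n)) h

lemma expPoly_hasDerivAt (n : ℕ) (x : ℝ) :
    HasDerivAt (expPoly (n + 1)) (expPoly n x) x := by
  have h : ∀ k ∈ Finset.range (n + 2),
      HasDerivAt (fun y : ℝ => y ^ k / (Nat.factorial k : ℝ))
        ((k : ℝ) * x ^ (k - 1) / (Nat.factorial k : ℝ)) x :=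
    fun k _ => (hasDerivAt_pow k x).div_const _
  have hs := HasDerivAt.sum h
  have hsum : ∑ k ∈ Finset.range (n + 2),
      (k : ℝ) * x ^ (k - 1) / (Nat.factorial k : ℝ) = expPoly n x := by
    rw [Finset.sum_range_succ']
    simp only [Nat.cast_zero, zero_mul, Nat.factorial_zero, Nat.cast_one, zero_div, add_zero]
    unfold expPoly
    refine Finset.sum_congr rfl fun k _ => ?_
    have hfac : (Nat.factorial (k + 1) : ℝ) = (k + 1) * Nat.factorial k := by
      push_cast [Nat.factorial_succ]; ring
    have hne : (Nat.factorial k : ℝ) ≠ 0 := by positivity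
    rw [hfac]
    push_cast
    rw [mul_div_mul_left _ _ (by positivity : ((k : ℝ) + 1) ≠ 0)]
  rw [hsum] at hs
  have hfun : expPoly (n + 1) = ∑ i ∈ Finset.range (n + 2), fun y : ℝ => y ^ i / (Nat.factorial i : ℝ) := by
    funext y; rw [Finset.sum_apply]; rfl
  rw [hfun]; exact hs

lemma expPoly_sign (n : ℕ) : ∀ x : ℝ, x < 0 →
    if Even n then Real.exp x < expPoly n x else expPoly n x < Real.exp x := by
  induction n with
  | zero =>
    intro x hx
    have : Real.exp x < 1 := Real.exp_lt_one_iff.2 hx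
    simpa [expPoly] using this
  | succ n ih =>
    intro x hx
    have hF : ∀ y : ℝ, HasDerivAt (fun z => Real.exp z - expPoly (n + 1) z)
        (Real.exp y - expPoly n y) y :=
      fun y => (Real.hasDerivAt_exp y).sub (expPoly_hasDerivAt n y)
    have hcont : ContinuousOn (fun z => Real.exp z - expPoly (n + 1) z) (Set.Iic (0 : ℝ)) :=
      fun y _ => ((hF y).differentiableAt.continuousAt).continuousWithinAt
    have hzero : Real.exp 0 - expPoly (n + 1) 0 = 0 := by simp [expPoly_zero]
    by_cases hn : Even n
    · -- n + 1 odd : show expPoly (n+1) x < exp x, i.e. F x > 0, F strictly decreasing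
      have hderiv : ∀ y ∈ interior (Set.Iic (0 : ℝ)),
          deriv (fun z => Real.exp z - expPoly (n + 1) z) y < 0 := by
        intro y hy
        rw [interior_Iic] at hy
        rw [(hF y).deriv]
        have h := ih y hy
        rw [if_pos hn] at h
        linarith
      have hanti := strictAntiOn_of_deriv_neg (convex_Iic (0 : ℝ)) hcont hderiv
      have h2 : Real.exp 0 - expPoly (n + 1) 0 < Real.exp x - expPoly (n + 1) x :=
        hanti (Set.mem_Iic.2 hx.le) (Set.mem_Iic.2 le_rfl) hx
      rw [hzero] at h2
      have hodd : ¬ Even (n + 1) := by simp [Nat.even_add_one, hn]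
      rw [if_neg hodd]
      linarith
    · have hderiv : ∀ y ∈ interior (Set.Iic (0 : ℝ)),
          0 < deriv (fun z => Real.exp z - expPoly (n + 1) z) y := by
        intro y hy
        rw [interior_Iic] at hy
        rw [(hF y).deriv]
        have h := ih y hy
        rw [if_neg hn] at h
        linarith
      have hmono := strictMonoOn_of_deriv_pos (convex_Iic (0 : ℝ)) hcont hderiv
      have h2 : Real.exp x - expPoly (n + 1) x < Real.exp 0 - expPoly (n + 1) 0 :=
        hmono (Set.mem_Iic.2 hx.le) (Set.mem_Iic.2 le_rfl) hx
      rw [hzero] at h2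
      have heven : Even (n + 1) := Nat.even_add_one.2 hn
      rw [if_pos heven]
      linarith

theorem stmt_10 (c : ℝ) (hc : 0 < c) (d : ℕ) (hd : Even d) :
    ∀ t : ℝ, 0 < (fcd c d).eval t := by
  intro t
  set x : ℝ := -(c * t) with hxdef
  have heval : (fcd c d).eval t
      = ∑ k ∈ Finset.range (d + 1), x ^ k / (Nat.factorial (k + 1) : ℝ) := by
    unfold fcd
    rw [Polynomial.eval_finset_sum]
    refine Finset.sum_congr rfl fun k _ => ?_
    simp only [Polynomial.eval_mul, Polynomial.eval_C, Polynomial.eval_pow,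
      Polynomial.eval_neg, Polynomial.eval_X]
    rw [hxdef, neg_mul_eq_mul_neg, mul_pow, div_mul_eq_mul_div, mul_comm]
  by_cases hx0 : 0 ≤ x
  · rw [heval, Finset.sum_range_succ']
    have h1 : (0 : ℝ) < x ^ 0 / (Nat.factorial (0 + 1) : ℝ) := by norm_num
    have h2 : 0 ≤ ∑ k ∈ Finset.range d, x ^ (k + 1) / (Nat.factorial (k + 1 + 1) : ℝ) :=
      Finset.sum_nonneg fun k _ => div_nonneg (pow_nonneg hx0 _) (by positivity)
    linarith
  · push_neg at hx0
    have hkey := expPoly_sign (d + 1) x hx0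
    have hodd : ¬ Even (d + 1) := by simp [Nat.even_add_one, hd]
    rw [if_neg hodd] at hkey
    have hexp : Real.exp x < 1 := Real.exp_lt_one_iff.2 hx0
    have hlt : expPoly (d + 1) x < 1 := lt_trans hkey hexp
    have hmul : x * (fcd c d).eval t = expPoly (d + 1) x - 1 := by
      have hL : x * (fcd c d).eval t
          = ∑ k ∈ Finset.range (d + 1), x ^ (k + 1) / (Nat.factorial (k + 1) : ℝ) := by
        rw [heval, Finset.mul_sum]
        exact Finset.sum_congr rfl fun k _ => by rw [pow_succ]; ring
      have hR : expPoly (d + 1) x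
          = (∑ k ∈ Finset.range (d + 1), x ^ (k + 1) / (Nat.factorial (k + 1) : ℝ)) + 1 := by
        unfold expPoly
        rw [Finset.sum_range_succ']
        simp
      rw [hL, hR]; ring
    nlinarith [hmul, hlt, hx0]
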